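/- Let $n \ge 3$ and let $u$ be a continuous positive function on $\mathbb{R}^n \setminus \{0\}$ such that $u_{x,\lambda}(y) \le u(y)$ for all $x \in \mathbb{R}^n \setminus \{0\}$, all $0 < \lambda < |x|$, and all $y \ne 0$ with $|y - x| \ge \lambda$. Then $u$ is radially symmetric about the origin, i.e., $u(y)$ depends only on $|y|$. -/

import Mathlib

open Filter MeasureTheory
open scoped RealInnerProductSpace Topology

noncomputable def grad {n : ℕ} (w : EuclideanSpace ℝ (Fin n) → ℝ)
    (x : EuclideanSpace ℝ (Fin n)) : Fin n → ℝ :=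
  fun i => fderiv ℝ w x (EuclideanSpace.single i 1)

noncomputable def hess {n : ℕ} (w : EuclideanSpace ℝ (Fin n) → ℝ)
    (x : EuclideanSpace ℝ (Fin n)) : Matrix (Fin n) (Fin n) ℝ :=
  Matrix.of fun i j =>
    fderiv ℝ (fun y => fderiv ℝ w y (EuclideanSpace.single i 1)) x (EuclideanSpace.single j 1)

noncomputable def gradSq {n : ℕ} (w : EuclideanSpace ℝ (Fin n) → ℝ)
    (x : EuclideanSpace ℝ (Fin n)) : ℝ :=
  ∑ i, (grad w x i) ^ 2

noncomputable def Aw {n : ℕ} (w : EuclideanSpace ℝ (Fin n) → ℝ)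
    (x : EuclideanSpace ℝ (Fin n)) : Matrix (Fin n) (Fin n) ℝ :=
  w x • hess w x - ((1 / 2) * gradSq w x) • (1 : Matrix (Fin n) (Fin n) ℝ)

noncomputable def Asch (n : ℕ) (u : EuclideanSpace ℝ (Fin n) → ℝ)
    (x : EuclideanSpace ℝ (Fin n)) : Matrix (Fin n) (Fin n) ℝ :=
  (-(2 / ((n : ℝ) - 2)) * (u x) ^ (-(((n : ℝ) + 2) / ((n : ℝ) - 2)))) • hess u x
    + ((2 * (n : ℝ) / ((n : ℝ) - 2) ^ 2) * (u x) ^ (-(2 * (n : ℝ) / ((n : ℝ) - 2)))) •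
        Matrix.of (fun i j => grad u x i * grad u x j)
    - ((2 / ((n : ℝ) - 2) ^ 2) * (u x) ^ (-(2 * (n : ℝ) / ((n : ℝ) - 2))) * gradSq u x) •
        (1 : Matrix (Fin n) (Fin n) ℝ)

noncomputable def kelvin {n : ℕ} (u : EuclideanSpace ℝ (Fin n) → ℝ)
    (x : EuclideanSpace ℝ (Fin n)) (l : ℝ) (y : EuclideanSpace ℝ (Fin n)) : ℝ :=
  (l ^ (n - 2) / ‖y - x‖ ^ (n - 2)) * u (x + (l ^ 2 / ‖y - x‖ ^ 2) • (y - x))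

lemma sqrt_tendsto_atTop : Tendsto Real.sqrt atTop atTop := by
  rw [tendsto_atTop_atTop]
  intro b
  refine ⟨(max b 0) ^ 2, fun a ha => ?_⟩
  have h := Real.sqrt_le_sqrt ha
  rw [Real.sqrt_sq (le_max_right b 0)] at h
  exact le_trans (le_max_left b 0) h

lemma sqrt_div_self_tendsto : Tendsto (fun t : ℝ => Real.sqrt t / t) atTop (𝓝 0) := by
  have : Tendsto (fun t : ℝ => (Real.sqrt t)⁻¹) atTop (𝓝 0) :=
    sqrt_tendsto_atTop.inv_tendsto_atTop
  refine this.congr' ?_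
  filter_upwards [eventually_gt_atTop (0:ℝ)] with t ht
  rw [Real.sqrt_div_self]

lemma sqrt_div_sq_tendsto : Tendsto (fun t : ℝ => Real.sqrt t / t ^ 2) atTop (𝓝 0) := by
  have h := sqrt_div_self_tendsto.mul tendsto_inv_atTop_zero
  rw [mul_zero] at h
  refine h.congr' ?_
  filter_upwards [eventually_gt_atTop (0:ℝ)] with t ht
  show √t / t * t⁻¹ = √t / t ^ 2
  rw [sq, div_mul_eq_div_div, div_eq_mul_inv, div_eq_mul_inv]


lemma key {n : ℕ} (u : EuclideanSpace ℝ (Fin n) → ℝ)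
    (hu : ContinuousOn u {(0 : EuclideanSpace ℝ (Fin n))}ᶜ)
    (hms : ∀ x : EuclideanSpace ℝ (Fin n), x ≠ 0 → ∀ l : ℝ, 0 < l → l < ‖x‖ →
      ∀ y : EuclideanSpace ℝ (Fin n), y ≠ 0 → l ≤ ‖y - x‖ → kelvin u x l y ≤ u y)
    (y z : EuclideanSpace ℝ (Fin n)) (hy : y ≠ 0) (hz : z ≠ 0) (hnorm : ‖y‖ = ‖z‖)
    (hne : y ≠ z) : u y ≤ u z := by
  set d : ℝ := ‖y - z‖ with hd_def
  have hd : 0 < d := by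
    rw [hd_def]; rw [norm_pos_iff]; exact sub_ne_zero.mpr hne
  set e : EuclideanSpace ℝ (Fin n) := d⁻¹ • (y - z) with he_def
  have he : ‖e‖ = 1 := by
    rw [he_def, norm_smul, norm_inv, Real.norm_eq_abs, abs_of_pos hd, ← hd_def,
      inv_mul_cancel₀ hd.ne']
  have hde : d • e = y - z := by
    rw [he_def, smul_smul, mul_inv_cancel₀ hd.ne', one_smul]
  have hze : ⟪z, e⟫ = -d / 2 := by
    rw [he_def, real_inner_smul_right]
    have h1 : ‖y - z‖ ^ 2 = ‖y‖ ^ 2 - 2 * ⟪y, z⟫ + ‖z‖ ^ 2 := norm_sub_sq_real y z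
    have h2 : ⟪z, y - z⟫ = ⟪z, y⟫ - ⟪z, z⟫ := inner_sub_right z y z
    have h3 : ⟪z, z⟫ = ‖z‖ ^ 2 := real_inner_self_eq_norm_sq z
    have h4 : ⟪z, y⟫ = ⟪y, z⟫ := real_inner_comm y z
    have h5 : d ^ 2 = 2 * ‖z‖ ^ 2 - 2 * ⟪y, z⟫ := by
      rw [hd_def, h1, hnorm]; ring
    rw [h2, h3, h4]
    have : ⟪y, z⟫ - ‖z‖ ^ 2 = -(d^2) / 2 := by linarith
    rw [this]
    field_simp
  set c : ℝ := ‖z‖ ^ 2 with hc_def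
  have hc : 0 < c := by have := norm_pos_iff.mpr hz; rw [hc_def]; positivity
  have hN : ∀ t : ℝ, ‖z - t • e‖ ^ 2 = t ^ 2 + t * d + c := by
    intro t
    rw [norm_sub_sq_real, real_inner_smul_right, hze, norm_smul, mul_pow,
      Real.norm_eq_abs, sq_abs, he, hc_def]
    ring
  -- the scaling factor
  set s : ℝ → ℝ := fun t => (t ^ 2 - Real.sqrt t) / (t ^ 2 + t * d + c) with hs_def
  have hd0 : Tendsto (fun t : ℝ => d / t) atTop (𝓝 0) :=
    tendsto_const_nhds.div_atTop tendsto_id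
  have hc0 : Tendsto (fun t : ℝ => c / t ^ 2) atTop (𝓝 0) :=
    tendsto_const_nhds.div_atTop (tendsto_pow_atTop two_ne_zero)
  have hc1 : Tendsto (fun t : ℝ => c / t) atTop (𝓝 0) :=
    tendsto_const_nhds.div_atTop tendsto_id
  have hB : Tendsto (fun t : ℝ => 1 + d / t + c / t ^ 2) atTop (𝓝 1) := by
    have := ((tendsto_const_nhds : Tendsto (fun _:ℝ => (1:ℝ)) atTop (𝓝 1)).add hd0).add hc0
    simpa using this
  have hA : Tendsto (fun t : ℝ => 1 - Real.sqrt t / t ^ 2) atTop (𝓝 1) := by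
    have := (tendsto_const_nhds : Tendsto (fun _:ℝ => (1:ℝ)) atTop (𝓝 1)).sub sqrt_div_sq_tendsto
    simpa using this
  have hA2 : Tendsto (fun t : ℝ => d + c / t + Real.sqrt t / t) atTop (𝓝 d) := by
    have := ((tendsto_const_nhds : Tendsto (fun _:ℝ => d) atTop (𝓝 d)).add hc1).add sqrt_div_self_tendsto
    simpa using this
  have hDpos : ∀ t : ℝ, 0 < t → 0 < t ^ 2 + t * d + c := by
    intro t ht; positivity
  have hs : Tendsto s atTop (𝓝 1) := by
    have h := hA.div hB one_ne_zero
    rw [div_one] at h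
    refine h.congr' ?_
    filter_upwards [eventually_gt_atTop (0:ℝ)] with t ht
    have h1 : t ^ 2 + t * d + c ≠ 0 := (hDpos t ht).ne'
    have h2 : t ≠ 0 := ht.ne'
    rw [hs_def]
    simp only [Pi.div_apply]
    field_simp
  have hts : Tendsto (fun t => t * (1 - s t)) atTop (𝓝 d) := by
    have h := hA2.div hB one_ne_zero
    rw [div_one] at h
    refine h.congr' ?_
    filter_upwards [eventually_gt_atTop (0:ℝ)] with t ht
    have h1 : t ^ 2 + t * d + c ≠ 0 := (hDpos t ht).ne'
    have h2 : t ≠ 0 := ht.ne'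
    rw [hs_def]
    simp only [Pi.div_apply]
    field_simp
    ring
  -- the image point tends to y
  have hp : Tendsto (fun t => s t • z + (t * (1 - s t)) • e) atTop (𝓝 y) := by
    have h := (hs.smul_const z).add (hts.smul_const e)
    rw [one_smul, hde] at h
    simpa using h
  -- continuity of u at y
  have hcont : ContinuousAt u y := hu.continuousAt (isOpen_compl_singleton.mem_nhds hy)
  have hU : Tendsto (fun t => u (s t • z + (t * (1 - s t)) • e)) atTop (𝓝 (u y)) :=
    hcont.tendsto.comp hp
  have hP : Tendsto (fun t => (Real.sqrt (s t)) ^ (n - 2)) atTop (𝓝 1) := by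
    have h1 : Tendsto (fun t => Real.sqrt (s t)) atTop (𝓝 1) := by
      have := (Real.continuous_sqrt.tendsto 1).comp hs
      simpa [Function.comp_def] using this
    have := h1.pow (n - 2)
    simpa using this
  -- basic estimates for t > 1
  have hfacts : ∀ t : ℝ, 1 < t →
      0 < t ^ 2 - Real.sqrt t ∧ ‖z - t • e‖ = Real.sqrt (t ^ 2 + t * d + c) ∧ ‖t • e‖ = t := by
    intro t ht1
    have ht0 : 0 < t := lt_trans one_pos ht1
    have hsqt : Real.sqrt t ≤ t := by
      have h1 : t ≤ t ^ 2 := by nlinarith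
      have h2 := Real.sqrt_le_sqrt h1
      rwa [Real.sqrt_sq ht0.le] at h2
    constructor
    · nlinarith [Real.sqrt_nonneg t]
    constructor
    · rw [← hN t]
      exact (Real.sqrt_sq (norm_nonneg _)).symm
    · rw [norm_smul, Real.norm_eq_abs, abs_of_pos ht0, he, mul_one]
  -- the kelvin transform equals the nice expression eventually
  have heq : ∀ᶠ t in atTop, kelvin u (t • e) (Real.sqrt (t ^ 2 - Real.sqrt t)) z
      = (Real.sqrt (s t)) ^ (n - 2) * u (s t • z + (t * (1 - s t)) • e) := by
    filter_upwards [eventually_gt_atTop (1:ℝ)] with t ht1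
    obtain ⟨hl0, hNval, -⟩ := hfacts t ht1
    have ht0 : 0 < t := lt_trans one_pos ht1
    have hratio : Real.sqrt (t ^ 2 - Real.sqrt t) / ‖z - t • e‖ = Real.sqrt (s t) := by
      rw [hNval, ← Real.sqrt_div hl0.le]
    have hsq2 : (Real.sqrt (t ^ 2 - Real.sqrt t)) ^ 2 / ‖z - t • e‖ ^ 2 = s t := by
      rw [Real.sq_sqrt hl0.le, hN t]
    have hvec : t • e + s t • (z - t • e) = s t • z + (t * (1 - s t)) • e := by
      module
    rw [kelvin, ← div_pow, hratio, hsq2, hvec]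
  have hf : Tendsto (fun t => kelvin u (t • e) (Real.sqrt (t ^ 2 - Real.sqrt t)) z)
      atTop (𝓝 (u y)) := by
    have h := hP.mul hU
    rw [one_mul] at h
    exact h.congr' (heq.mono fun t ht => ht.symm)
  have hle : ∀ᶠ t in atTop, kelvin u (t • e) (Real.sqrt (t ^ 2 - Real.sqrt t)) z ≤ u z := by
    filter_upwards [eventually_gt_atTop (1:ℝ)] with t ht1
    obtain ⟨hl0, hNval, hnorme⟩ := hfacts t ht1
    have ht0 : 0 < t := lt_trans one_pos ht1
    have hx0 : t • e ≠ 0 := by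
      intro h
      rw [h, norm_zero] at hnorme
      exact ht0.ne hnorme
    have hlampos : 0 < Real.sqrt (t ^ 2 - Real.sqrt t) := Real.sqrt_pos.mpr hl0
    have hlamlt : Real.sqrt (t ^ 2 - Real.sqrt t) < ‖t • e‖ := by
      rw [hnorme]
      have h1 : t ^ 2 - Real.sqrt t < t ^ 2 := by
        have := Real.sqrt_pos.mpr ht0
        linarith
      have h2 := Real.sqrt_lt_sqrt hl0.le h1
      rwa [Real.sqrt_sq ht0.le] at h2
    have hlamle : Real.sqrt (t ^ 2 - Real.sqrt t) ≤ ‖z - t • e‖ := by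
      rw [hNval]
      apply Real.sqrt_le_sqrt
      nlinarith [Real.sqrt_nonneg t]
    exact hms (t • e) hx0 _ hlampos hlamlt z hz hlamle
  exact le_of_tendsto hf hle


theorem stmt12 {n : ℕ} (hn : 3 ≤ n) (u : EuclideanSpace ℝ (Fin n) → ℝ)
    (hu : ContinuousOn u {(0 : EuclideanSpace ℝ (Fin n))}ᶜ)
    (hupos : ∀ x : EuclideanSpace ℝ (Fin n), x ≠ 0 → 0 < u x)
    (hms : ∀ x : EuclideanSpace ℝ (Fin n), x ≠ 0 → ∀ l : ℝ, 0 < l → l < ‖x‖ →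
      ∀ y : EuclideanSpace ℝ (Fin n), y ≠ 0 → l ≤ ‖y - x‖ → kelvin u x l y ≤ u y) :
    ∀ y z : EuclideanSpace ℝ (Fin n), y ≠ 0 → z ≠ 0 → ‖y‖ = ‖z‖ → u y = u z := by
  intro y z hy hz hnorm
  by_cases h : y = z
  · rw [h]
  · exact le_antisymm (key u hu hms y z hy hz hnorm h)
      (key u hu hms z y hz hy hnorm.symm (Ne.symm h))
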